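/- Let q be a prime power, 1 ≤ k < n, 0 ≤ c ≤ k−1, and let C ⊆ G_q(k,n) be an equidistant c-intersecting code. The following are equivalent: (1) C is a sunflower; (2) dim span(C^⊥) = n − c; (3) for all distinct A, B ∈ C, span(C^⊥) = A^⊥ + B^⊥. -/

import Mathlib

open Submodule Module Set

/-- The orthogonal complement of a subspace of `Fin n → F` with respect to the
standard bilinear form `(x, y) ↦ ∑ i, x i * y i`. -/
def stdOrth {F : Type} [Field F] {n : ℕ} (U : Submodule F (Fin n → F)) :
    Submodule F (Fin n → F) where
  carrier := {x | ∀ y ∈ U, ∑ i, x i * y i = 0}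
  add_mem' := by
    intro a b ha hb y hy
    simp only [Set.mem_setOf_eq] at *
    simp [add_mul, Finset.sum_add_distrib, ha y hy, hb y hy]
  zero_mem' := by intro y hy; simp
  smul_mem' := by
    intro c a ha y hy
    simp only [Set.mem_setOf_eq] at *
    simp [smul_eq_mul, mul_assoc, ← Finset.mul_sum, ha y hy]

/-- An equidistant `c`-intersecting subspace code of constant dimension `k` in `F^n`:
a set of at least two `k`-dimensional subspaces, any two distinct members of which
intersect in dimension `c`. -/
def IsEquidistantCode (F : Type) [Field F] (n k c : ℕ)
    (C : Set (Submodule F (Fin n → F))) : Prop :=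
  2 ≤ C.ncard ∧ (∀ U ∈ C, Module.finrank F U = k) ∧
    ∀ U ∈ C, ∀ V ∈ C, U ≠ V → Module.finrank F ↥(U ⊓ V) = c

/-- A set of subspaces is a sunflower if there is a common center `Z` equal to the
intersection of any two distinct members. -/
def IsSunflower {F : Type} [Field F] {n : ℕ} (C : Set (Submodule F (Fin n → F))) : Prop :=
  ∃ Z : Submodule F (Fin n → F), ∀ U ∈ C, ∀ V ∈ C, U ≠ V → U ⊓ V = Z

/-- `eMax F n k c` is the maximum cardinality of an equidistant `c`-intersecting
code of constant dimension `k` in `F^n`. -/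
noncomputable def eMax (F : Type) [Field F] (n k c : ℕ) : ℕ :=
  sSup {m | ∃ C : Set (Submodule F (Fin n → F)), IsEquidistantCode F n k c C ∧ C.ncard = m}

section Aux

variable {F : Type} [Field F] {n : ℕ}

noncomputable def dotB (F : Type) [Field F] (n : ℕ) : LinearMap.BilinForm F (Fin n → F) :=
  Matrix.toBilin' (1 : Matrix (Fin n) (Fin n) F)

lemma dotB_apply (x y : Fin n → F) : dotB F n x y = ∑ i, x i * y i := by
  simp [dotB, Matrix.toBilin'_apply', Matrix.one_mulVec, dotProduct]

lemma dotB_refl : (dotB F n).IsRefl := by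
  intro x y h
  simp only [dotB_apply] at h ⊢
  simpa [mul_comm] using h

lemma dotB_nondeg : (dotB F n).Nondegenerate :=
  Matrix.Nondegenerate.toBilin' (Matrix.nondegenerate_of_det_ne_zero (by simp))

lemma mem_stdOrth {U : Submodule F (Fin n → F)} {x : Fin n → F} :
    x ∈ stdOrth U ↔ ∀ y ∈ U, ∑ i, x i * y i = 0 := Iff.rfl

lemma stdOrth_eq (U : Submodule F (Fin n → F)) : stdOrth U = (dotB F n).orthogonal U := by
  ext x
  simp only [mem_stdOrth, LinearMap.BilinForm.mem_orthogonal_iff, LinearMap.BilinForm.IsOrtho,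
    dotB_apply]
  constructor <;> intro h y hy <;> simpa [mul_comm] using h y hy

lemma finrank_stdOrth (U : Submodule F (Fin n → F)) :
    finrank F (stdOrth U) = n - finrank F U := by
  rw [stdOrth_eq, LinearMap.BilinForm.finrank_orthogonal dotB_nondeg,
    Module.finrank_pi]
  simp

lemma stdOrth_stdOrth (U : Submodule F (Fin n → F)) : stdOrth (stdOrth U) = U := by
  rw [stdOrth_eq, stdOrth_eq]
  exact LinearMap.BilinForm.orthogonal_orthogonal dotB_nondeg dotB_refl U

lemma stdOrth_antitone {U V : Submodule F (Fin n → F)} (h : U ≤ V) : stdOrth V ≤ stdOrth U :=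
  fun x hx y hy => hx y (h hy)

lemma stdOrth_sup (A B : Submodule F (Fin n → F)) :
    stdOrth (A ⊔ B) = stdOrth A ⊓ stdOrth B := by
  apply le_antisymm
  · exact le_inf (stdOrth_antitone le_sup_left) (stdOrth_antitone le_sup_right)
  · intro x hx
    rw [mem_stdOrth]
    intro y hy
    rw [Submodule.mem_sup] at hy
    obtain ⟨a, ha, b, hb, rfl⟩ := hy
    have h1 := (Submodule.mem_inf.mp hx).1 a ha
    have h2 := (Submodule.mem_inf.mp hx).2 b hb
    simp only [Pi.add_apply, mul_add, Finset.sum_add_distrib, h1, h2, add_zero]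

lemma stdOrth_inf (A B : Submodule F (Fin n → F)) :
    stdOrth (A ⊓ B) = stdOrth A ⊔ stdOrth B := by
  conv_lhs => rw [← stdOrth_stdOrth A, ← stdOrth_stdOrth B, ← stdOrth_sup, stdOrth_stdOrth]

end Aux


/-- For an equidistant `c`-intersecting code `C ⊆ G_q(k,n)` the following are
equivalent: (1) `C` is a sunflower; (2) `dim span(C^⊥) = n - c`;
(3) for all distinct `A, B ∈ C`, `span(C^⊥) = A^⊥ + B^⊥`. -/
theorem sunflower_tfae
    (q : ℕ) (hq : IsPrimePow q) (F : Type) [Field F] [Fintype F]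
    (hF : Fintype.card F = q) (k n c : ℕ) (hk : 1 ≤ k) (hkn : k < n) (hc : c ≤ k - 1)
    (C : Set (Submodule F (Fin n → F))) (hC : IsEquidistantCode F n k c C) :
    List.TFAE [IsSunflower C,
      Module.finrank F ↥(sSup (stdOrth '' C)) = n - c,
      ∀ A ∈ C, ∀ B ∈ C, A ≠ B → sSup (stdOrth '' C) = stdOrth A ⊔ stdOrth B] := by
  obtain ⟨hcard, hdim, hint⟩ := hC
  have hfin : C.Finite := Set.finite_of_ncard_ne_zero (by omega)
  obtain ⟨A₀, hA₀, B₀, hB₀, hAB₀⟩ := (Set.one_lt_ncard hfin).mp (by omega)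
  tfae_have 1 → 3
  | ⟨Z, hZ⟩ => by
    intro A hA B hB hne
    apply le_antisymm
    · apply sSup_le
      rintro W ⟨U, hU, rfl⟩
      have hZU : Z ≤ U := by
        rcases eq_or_ne U A with rfl | hUA
        · rw [← hZ U hU B hB hne]; exact inf_le_left
        · rw [← hZ U hU A hA hUA]; exact inf_le_left
      calc stdOrth U ≤ stdOrth Z := stdOrth_antitone hZU
        _ = stdOrth (A ⊓ B) := by rw [hZ A hA B hB hne]
        _ = stdOrth A ⊔ stdOrth B := stdOrth_inf A B
    · exact sup_le (le_sSup ⟨A, hA, rfl⟩) (le_sSup ⟨B, hB, rfl⟩)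
  tfae_have 3 → 2
  | h3 => by
    rw [h3 A₀ hA₀ B₀ hB₀ hAB₀, ← stdOrth_inf, finrank_stdOrth, hint A₀ hA₀ B₀ hB₀ hAB₀]
  tfae_have 2 → 1
  | h2 => by
    refine ⟨stdOrth (sSup (stdOrth '' C)), fun U hU V hV hne => ?_⟩
    have hle : stdOrth (sSup (stdOrth '' C)) ≤ U ⊓ V := by
      refine le_inf ?_ ?_
      · calc stdOrth (sSup (stdOrth '' C)) ≤ stdOrth (stdOrth U) :=
              stdOrth_antitone (le_sSup ⟨U, hU, rfl⟩)
          _ = U := stdOrth_stdOrth U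
      · calc stdOrth (sSup (stdOrth '' C)) ≤ stdOrth (stdOrth V) :=
              stdOrth_antitone (le_sSup ⟨V, hV, rfl⟩)
          _ = V := stdOrth_stdOrth V
    refine (Submodule.eq_of_le_of_finrank_le hle ?_).symm
    rw [hint U hU V hV hne, finrank_stdOrth, h2]
    omega
  tfae_finish
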